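/- Let N, d be positive integers and let U be a unitary matrix indexed by Fin N × Fin d. Then: (i) for every Y : Matrix (Fin d) (Fin d) ℂ, ((1 ⊗ Y) commutes with Uᴴ * (X ⊗ 1) * U for every X : Matrix (Fin N) (Fin N) ℂ) if and only if Y commutes with every product (Uᴴ)(f₁,g₁) * U(f₂,g₂); hence the commutant of A_r(U) equals {Y : ∀ X, (1 ⊗ Y) * (Uᴴ*(X⊗1)*U) = (Uᴴ*(X⊗1)*U) * (1 ⊗ Y)}; and (ii) A_r(U) is the smallest unital star-subalgebra A of Matrix (Fin d) (Fin d) ℂ such that for every X : Matrix (Fin N) (Fin N) ℂ, every block (Uᴴ*(X⊗1)*U)(e_i, e_j) belongs to A (i.e. Uᴴ(X⊗1)U ∈ B(H) ⊗ A for all X). -/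

import Mathlib

open scoped Kronecker
open Matrix

/-- The slice `M(f,g)` of an operator on `ℂ^N ⊗ ℂ^d`: the partial trace `Tr_{|g⟩⟨f|}[M]`,
given by `M(f,g) k l = ∑ i j, conj (f i) * g j * M (i,k) (j,l)`. -/
noncomputable def envSlice {N d : ℕ} (M : Matrix (Fin N × Fin d) (Fin N × Fin d) ℂ)
    (f g : Fin N → ℂ) : Matrix (Fin d) (Fin d) ℂ :=
  Matrix.of fun k l => ∑ i, ∑ j, (starRingEnd ℂ) (f i) * g j * M (i, k) (j, l)

/-- The Environment Algebra `A(U)`: the unital star-subalgebra generated by all slices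
`U(f,g)` and `Uᴴ(f,g)`. -/
noncomputable def envAlg {N d : ℕ} (U : Matrix (Fin N × Fin d) (Fin N × Fin d) ℂ) :
    StarSubalgebra ℂ (Matrix (Fin d) (Fin d) ℂ) :=
  StarAlgebra.adjoin ℂ
    ({A | ∃ f g, A = envSlice U f g} ∪ {A | ∃ f g, A = envSlice Uᴴ f g})

/-- The Environment Right-Action Algebra `A_r(U)`: the unital star-subalgebra generated by all
products `Uᴴ(f₁,g₁) * U(f₂,g₂)`. -/
noncomputable def envActAlg {N d : ℕ} (U : Matrix (Fin N × Fin d) (Fin N × Fin d) ℂ) :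
    StarSubalgebra ℂ (Matrix (Fin d) (Fin d) ℂ) :=
  StarAlgebra.adjoin ℂ
    {A | ∃ f₁ g₁ f₂ g₂, A = envSlice Uᴴ f₁ g₁ * envSlice U f₂ g₂}

section Aux

variable {N d : ℕ}

private lemma sum_rot {ι κ μ : Type*} [Fintype ι] [Fintype κ] [Fintype μ] (f : ι → κ → μ → ℂ) :
    ∑ a, ∑ b, ∑ c, f a b c = ∑ c, ∑ a, ∑ b, f a b c := by
  have h : ∀ a, ∑ b, ∑ c, f a b c = ∑ c, ∑ b, f a b c := fun a => Finset.sum_comm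
  simp_rw [h]; exact Finset.sum_comm

private lemma slice_single (M : Matrix (Fin N × Fin d) (Fin N × Fin d) ℂ) (i j : Fin N)
    (k l : Fin d) : envSlice M (Pi.single i 1) (Pi.single j 1) k l = M (i,k) (j,l) := by
  simp [envSlice, Pi.single_apply, Finset.sum_ite_eq', ite_mul, zero_mul, mul_ite, mul_zero]

private lemma kron_one_mul_apply (Y : Matrix (Fin d) (Fin d) ℂ)
    (M : Matrix (Fin N × Fin d) (Fin N × Fin d) ℂ) (i : Fin N) (k : Fin d) (q : Fin N × Fin d) :
    (((1 : Matrix (Fin N) (Fin N) ℂ) ⊗ₖ Y) * M) (i,k) q = ∑ b, Y k b * M (i,b) q := by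
  rw [Matrix.mul_apply, Fintype.sum_prod_type, Finset.sum_comm]
  simp [Matrix.one_apply, ite_mul, zero_mul, kroneckerMap_apply]

private lemma mul_kron_one_apply (Y : Matrix (Fin d) (Fin d) ℂ)
    (M : Matrix (Fin N × Fin d) (Fin N × Fin d) ℂ) (p : Fin N × Fin d) (j : Fin N) (l : Fin d) :
    (M * ((1 : Matrix (Fin N) (Fin N) ℂ) ⊗ₖ Y)) p (j,l) = ∑ b, M p (j,b) * Y b l := by
  rw [Matrix.mul_apply, Fintype.sum_prod_type]
  simp [Matrix.one_apply, mul_ite, ite_mul, mul_zero, zero_mul, kroneckerMap_apply]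

private lemma slice_left (Y : Matrix (Fin d) (Fin d) ℂ)
    (M : Matrix (Fin N × Fin d) (Fin N × Fin d) ℂ) (f g : Fin N → ℂ) :
    envSlice (((1 : Matrix (Fin N) (Fin N) ℂ) ⊗ₖ Y) * M) f g = Y * envSlice M f g := by
  ext k l
  simp only [envSlice, of_apply, kron_one_mul_apply]
  simp only [Matrix.mul_apply, of_apply, Finset.mul_sum]
  refine Eq.trans (sum_rot _) ?_
  exact Finset.sum_congr rfl fun b _ => Finset.sum_congr rfl fun i _ =>
    Finset.sum_congr rfl fun j _ => by ring

private lemma slice_right (Y : Matrix (Fin d) (Fin d) ℂ)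
    (M : Matrix (Fin N × Fin d) (Fin N × Fin d) ℂ) (f g : Fin N → ℂ) :
    envSlice (M * ((1 : Matrix (Fin N) (Fin N) ℂ) ⊗ₖ Y)) f g = envSlice M f g * Y := by
  ext k l
  simp only [envSlice, of_apply, mul_kron_one_apply]
  simp only [Matrix.mul_apply, of_apply, Finset.sum_mul, Finset.mul_sum]
  refine Eq.trans (sum_rot _) ?_
  exact Finset.sum_congr rfl fun b _ => Finset.sum_congr rfl fun i _ =>
    Finset.sum_congr rfl fun j _ => by ring

private lemma slice_add (M M' : Matrix (Fin N × Fin d) (Fin N × Fin d) ℂ) (f g : Fin N → ℂ) :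
    envSlice (M + M') f g = envSlice M f g + envSlice M' f g := by
  ext k l
  simp [envSlice, mul_add, Finset.sum_add_distrib]

private lemma slice_smul (x : ℂ) (M : Matrix (Fin N × Fin d) (Fin N × Fin d) ℂ)
    (f g : Fin N → ℂ) : envSlice (x • M) f g = x • envSlice M f g := by
  ext k l
  simp only [envSlice, of_apply, Matrix.smul_apply, smul_eq_mul, Finset.mul_sum]
  exact Finset.sum_congr rfl fun i _ => Finset.sum_congr rfl fun j _ => by ring

private lemma slice_star (M : Matrix (Fin N × Fin d) (Fin N × Fin d) ℂ) (f g : Fin N → ℂ) :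
    star (envSlice M f g) = envSlice Mᴴ g f := by
  ext k l
  simp only [star_eq_conjTranspose, conjTranspose_apply, envSlice, of_apply, star_sum, star_mul',
    Complex.star_def, Complex.conj_conj]
  rw [Finset.sum_comm]
  refine Finset.sum_congr rfl fun i _ => Finset.sum_congr rfl fun j _ => ?_
  ring

private lemma slice_expand (M : Matrix (Fin N × Fin d) (Fin N × Fin d) ℂ) (f g : Fin N → ℂ) :
    envSlice M f g = ∑ i, ∑ j, ((starRingEnd ℂ) (f i) * g j) •
      envSlice M (Pi.single i 1) (Pi.single j 1) := by
  ext k l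
  simp only [Matrix.sum_apply, Matrix.smul_apply, slice_single, smul_eq_mul]
  rfl

private lemma slice_single_g (M : Matrix (Fin N × Fin d) (Fin N × Fin d) ℂ) (f : Fin N → ℂ)
    (a : Fin N) (k l : Fin d) :
    envSlice M f (Pi.single a 1) k l = ∑ i, (starRingEnd ℂ) (f i) * M (i,k) (a,l) := by
  simp [envSlice, Pi.single_apply, mul_ite, mul_zero, mul_one, ite_mul, zero_mul,
    Finset.sum_ite_eq', mul_assoc]

private lemma slice_single_f (M : Matrix (Fin N × Fin d) (Fin N × Fin d) ℂ) (g : Fin N → ℂ)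
    (c : Fin N) (k l : Fin d) :
    envSlice M (Pi.single c 1) g k l = ∑ j, g j * M (c,k) (j,l) := by
  simp only [envSlice, of_apply]
  rw [Finset.sum_comm]
  simp [Pi.single_apply, apply_ite (starRingEnd ℂ), ite_mul, zero_mul, one_mul,
    Finset.sum_ite_eq']

private lemma slice_expand_g (M : Matrix (Fin N × Fin d) (Fin N × Fin d) ℂ) (f g : Fin N → ℂ) :
    envSlice M f g = ∑ a, g a • envSlice M f (Pi.single a 1) := by
  ext k l
  simp only [Matrix.sum_apply, Matrix.smul_apply, smul_eq_mul, slice_single_g]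
  simp only [envSlice, of_apply, Finset.mul_sum]
  rw [Finset.sum_comm]
  exact Finset.sum_congr rfl fun a _ => Finset.sum_congr rfl fun i _ => by ring

private lemma slice_expand_f (M : Matrix (Fin N × Fin d) (Fin N × Fin d) ℂ) (f g : Fin N → ℂ) :
    envSlice M f g = ∑ c, (starRingEnd ℂ) (f c) • envSlice M (Pi.single c 1) g := by
  ext k l
  simp only [Matrix.sum_apply, Matrix.smul_apply, smul_eq_mul, slice_single_f]
  simp only [envSlice, of_apply, Finset.mul_sum]
  exact Finset.sum_congr rfl fun c _ => Finset.sum_congr rfl fun j _ => by ring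

private lemma slice_zero (f g : Fin N → ℂ) :
    envSlice (0 : Matrix (Fin N × Fin d) (Fin N × Fin d) ℂ) f g = 0 := by
  ext k l; simp [envSlice]

private lemma slice_sum {ι : Type*} (s : Finset ι)
    (M : ι → Matrix (Fin N × Fin d) (Fin N × Fin d) ℂ) (f g : Fin N → ℂ) :
    envSlice (∑ x ∈ s, M x) f g = ∑ x ∈ s, envSlice (M x) f g := by
  classical
  induction s using Finset.induction with
  | empty => simp [slice_zero]
  | insert _ _ h ih => rw [Finset.sum_insert h, slice_add, ih, Finset.sum_insert h]

variable (U : Matrix (Fin N × Fin d) (Fin N × Fin d) ℂ)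

private lemma sandwichA (X : Matrix (Fin N) (Fin N) ℂ) (i : Fin N) (k : Fin d) (c : Fin N)
    (e : Fin d) :
    (Uᴴ * (X ⊗ₖ (1 : Matrix (Fin d) (Fin d) ℂ))) (i,k) (c,e)
      = ∑ a, (starRingEnd ℂ) (U (a,e) (i,k)) * X a c := by
  rw [Matrix.mul_apply, Fintype.sum_prod_type]
  simp [Matrix.one_apply, conjTranspose_apply, kroneckerMap_apply, mul_ite, mul_one, mul_zero,
    Complex.star_def, mul_comm]

private lemma sandwichE (a c i j : Fin N) (k l : Fin d) :
    (Uᴴ * (Matrix.single a c (1:ℂ) ⊗ₖ (1 : Matrix (Fin d) (Fin d) ℂ)) * U) (i,k) (j,l)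
      = ∑ e, (starRingEnd ℂ) (U (a,e) (i,k)) * U (c,e) (j,l) := by
  rw [Matrix.mul_apply, Fintype.sum_prod_type, Finset.sum_comm]
  simp only [sandwichA, Matrix.single, of_apply, ite_and, mul_ite, mul_one, mul_zero,
    Finset.sum_ite_eq, Finset.mem_univ, if_true, ite_mul, zero_mul, Finset.sum_ite_eq']

private lemma slice_sandwich_std (a c : Fin N) (f g : Fin N → ℂ) :
    envSlice (Uᴴ * (Matrix.single a c (1:ℂ) ⊗ₖ (1 : Matrix (Fin d) (Fin d) ℂ)) * U) f g
      = envSlice Uᴴ f (Pi.single a 1) * envSlice U (Pi.single c 1) g := by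
  ext k l
  rw [Matrix.mul_apply]
  simp only [slice_single_g, slice_single_f]
  simp only [envSlice, of_apply, sandwichE, conjTranspose_apply, Complex.star_def,
    Finset.sum_mul, Finset.mul_sum]
  refine Eq.trans (sum_rot _) (Finset.sum_congr rfl fun e _ => ?_)
  rw [Finset.sum_comm]
  exact Finset.sum_congr rfl fun i _ => Finset.sum_congr rfl fun j _ => by ring

private lemma slice_sandwich (X : Matrix (Fin N) (Fin N) ℂ) (f g : Fin N → ℂ) :
    envSlice (Uᴴ * (X ⊗ₖ (1 : Matrix (Fin d) (Fin d) ℂ)) * U) f g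
      = ∑ a, ∑ c, X a c •
          (envSlice Uᴴ f (Pi.single a 1) * envSlice U (Pi.single c 1) g) := by
  have hX : Uᴴ * (X ⊗ₖ (1 : Matrix (Fin d) (Fin d) ℂ)) * U
      = ∑ a, ∑ c, X a c • (Uᴴ * (Matrix.single a c (1:ℂ) ⊗ₖ (1 : Matrix (Fin d) (Fin d) ℂ)) * U) := by
    ext ⟨i, k⟩ ⟨j, l⟩
    simp only [Matrix.sum_apply, Matrix.smul_apply, smul_eq_mul, sandwichE]
    rw [Matrix.mul_apply, Fintype.sum_prod_type]
    simp only [sandwichA, Finset.sum_mul, Finset.mul_sum]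
    refine Eq.trans (sum_rot _) ?_
    exact Finset.sum_congr rfl fun a _ => Finset.sum_congr rfl fun c' _ =>
      Finset.sum_congr rfl fun e _ => by ring
  rw [hX, slice_sum]
  refine Finset.sum_congr rfl fun a _ => ?_
  rw [slice_sum]
  refine Finset.sum_congr rfl fun c _ => ?_
  rw [slice_smul, slice_sandwich_std]

private lemma prod_eq_slice (f₁ g₁ f₂ g₂ : Fin N → ℂ) :
    envSlice Uᴴ f₁ g₁ * envSlice U f₂ g₂
      = envSlice (Uᴴ * ((Matrix.of fun a c => g₁ a * (starRingEnd ℂ) (f₂ c))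
          ⊗ₖ (1 : Matrix (Fin d) (Fin d) ℂ)) * U) f₁ g₂ := by
  rw [slice_sandwich]
  conv_lhs => rw [slice_expand_g Uᴴ f₁ g₁, slice_expand_f U f₂ g₂]
  simp only [Finset.sum_mul, Finset.mul_sum, smul_mul_assoc, mul_smul_comm, smul_smul,
    Finset.smul_sum, of_apply]
  rw [Finset.sum_comm]
  exact Finset.sum_congr rfl fun a _ => Finset.sum_congr rfl fun c _ => by rw [mul_comm]

end Aux

/-- (i) characterization of the commutant of `A_r(U)`; (ii) `A_r(U)` is the
smallest unital star-subalgebra `A` with `Uᴴ(X ⊗ 1)U ∈ B(H) ⊗ A` for all `X`. -/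
theorem envActAlg_smallest (N d : ℕ) (hN : 0 < N) (hd : 0 < d)
    (U : Matrix (Fin N × Fin d) (Fin N × Fin d) ℂ)
    (hU : Uᴴ * U = 1) (hU' : U * Uᴴ = 1) :
    (∀ Y : Matrix (Fin d) (Fin d) ℂ,
      (∀ X : Matrix (Fin N) (Fin N) ℂ,
        ((1 : Matrix (Fin N) (Fin N) ℂ) ⊗ₖ Y) * (Uᴴ * (X ⊗ₖ (1 : Matrix (Fin d) (Fin d) ℂ)) * U)
          = (Uᴴ * (X ⊗ₖ (1 : Matrix (Fin d) (Fin d) ℂ)) * U) *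
              ((1 : Matrix (Fin N) (Fin N) ℂ) ⊗ₖ Y))
      ↔ (∀ f₁ g₁ f₂ g₂ : Fin N → ℂ,
          Y * (envSlice Uᴴ f₁ g₁ * envSlice U f₂ g₂)
            = (envSlice Uᴴ f₁ g₁ * envSlice U f₂ g₂) * Y)) ∧
    ({Y : Matrix (Fin d) (Fin d) ℂ | ∀ A ∈ envActAlg U, Y * A = A * Y} =
      {Y : Matrix (Fin d) (Fin d) ℂ | ∀ X : Matrix (Fin N) (Fin N) ℂ,
        ((1 : Matrix (Fin N) (Fin N) ℂ) ⊗ₖ Y) * (Uᴴ * (X ⊗ₖ (1 : Matrix (Fin d) (Fin d) ℂ)) * U)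
          = (Uᴴ * (X ⊗ₖ (1 : Matrix (Fin d) (Fin d) ℂ)) * U) *
              ((1 : Matrix (Fin N) (Fin N) ℂ) ⊗ₖ Y)}) ∧
    (∀ X : Matrix (Fin N) (Fin N) ℂ, ∀ i j : Fin N,
      envSlice (Uᴴ * (X ⊗ₖ (1 : Matrix (Fin d) (Fin d) ℂ)) * U)
        (Pi.single i 1) (Pi.single j 1) ∈ envActAlg U) ∧
    ∀ A : StarSubalgebra ℂ (Matrix (Fin d) (Fin d) ℂ),
      (∀ X : Matrix (Fin N) (Fin N) ℂ, ∀ i j : Fin N,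
        envSlice (Uᴴ * (X ⊗ₖ (1 : Matrix (Fin d) (Fin d) ℂ)) * U)
          (Pi.single i 1) (Pi.single j 1) ∈ A) →
      envActAlg U ≤ A := by
  have hiff : ∀ Y : Matrix (Fin d) (Fin d) ℂ,
      (∀ X : Matrix (Fin N) (Fin N) ℂ,
        ((1 : Matrix (Fin N) (Fin N) ℂ) ⊗ₖ Y) * (Uᴴ * (X ⊗ₖ (1 : Matrix (Fin d) (Fin d) ℂ)) * U)
          = (Uᴴ * (X ⊗ₖ (1 : Matrix (Fin d) (Fin d) ℂ)) * U) *
              ((1 : Matrix (Fin N) (Fin N) ℂ) ⊗ₖ Y))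
      ↔ (∀ f₁ g₁ f₂ g₂ : Fin N → ℂ,
          Y * (envSlice Uᴴ f₁ g₁ * envSlice U f₂ g₂)
            = (envSlice Uᴴ f₁ g₁ * envSlice U f₂ g₂) * Y) := by
    intro Y
    constructor
    · intro h f₁ g₁ f₂ g₂
      rw [prod_eq_slice, ← slice_left, h, slice_right]
    · intro h X
      ext ⟨i, k⟩ ⟨j, l⟩
      have key : envSlice (((1 : Matrix (Fin N) (Fin N) ℂ) ⊗ₖ Y) *
            (Uᴴ * (X ⊗ₖ (1 : Matrix (Fin d) (Fin d) ℂ)) * U)) (Pi.single i 1) (Pi.single j 1)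
          = envSlice ((Uᴴ * (X ⊗ₖ (1 : Matrix (Fin d) (Fin d) ℂ)) * U) *
            ((1 : Matrix (Fin N) (Fin N) ℂ) ⊗ₖ Y)) (Pi.single i 1) (Pi.single j 1) := by
        rw [slice_left, slice_right, slice_sandwich, Finset.mul_sum, Finset.sum_mul]
        refine Finset.sum_congr rfl fun a _ => ?_
        rw [Finset.mul_sum, Finset.sum_mul]
        refine Finset.sum_congr rfl fun c _ => ?_
        rw [mul_smul_comm, smul_mul_assoc, h]
      calc (((1 : Matrix (Fin N) (Fin N) ℂ) ⊗ₖ Y) *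
            (Uᴴ * (X ⊗ₖ (1 : Matrix (Fin d) (Fin d) ℂ)) * U)) (i,k) (j,l)
          = envSlice (((1 : Matrix (Fin N) (Fin N) ℂ) ⊗ₖ Y) *
            (Uᴴ * (X ⊗ₖ (1 : Matrix (Fin d) (Fin d) ℂ)) * U))
              (Pi.single i 1) (Pi.single j 1) k l := (slice_single _ i j k l).symm
        _ = envSlice ((Uᴴ * (X ⊗ₖ (1 : Matrix (Fin d) (Fin d) ℂ)) * U) *
            ((1 : Matrix (Fin N) (Fin N) ℂ) ⊗ₖ Y)) (Pi.single i 1) (Pi.single j 1) k l := by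
              rw [key]
        _ = _ := slice_single _ i j k l
  have hmem : ∀ X : Matrix (Fin N) (Fin N) ℂ, ∀ i j : Fin N,
      envSlice (Uᴴ * (X ⊗ₖ (1 : Matrix (Fin d) (Fin d) ℂ)) * U)
        (Pi.single i 1) (Pi.single j 1) ∈ envActAlg U := by
    intro X i j
    rw [slice_sandwich]
    refine sum_mem fun a _ => sum_mem fun c _ => SMulMemClass.smul_mem _ ?_
    exact StarAlgebra.subset_adjoin ℂ _ ⟨Pi.single i 1, Pi.single a 1, Pi.single c 1,
      Pi.single j 1, rfl⟩
  refine ⟨hiff, ?_, hmem, ?_⟩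
  · ext Y
    simp only [Set.mem_setOf_eq]
    constructor
    · intro h
      exact (hiff Y).mpr fun f₁ g₁ f₂ g₂ =>
        h _ (StarAlgebra.subset_adjoin ℂ _ ⟨f₁, g₁, f₂, g₂, rfl⟩)
    · intro h A hA
      have hgen := (hiff Y).mp h
      have main : ∀ B, B ∈ envActAlg U → (Y * B = B * Y ∧ Y * star B = star B * Y) := by
        intro B hB
        induction hB using StarAlgebra.adjoin_induction with
        | mem x hx =>
          obtain ⟨f₁, g₁, f₂, g₂, rfl⟩ := hx
          refine ⟨hgen f₁ g₁ f₂ g₂, ?_⟩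
          have hs : star (envSlice Uᴴ f₁ g₁ * envSlice U f₂ g₂)
              = envSlice Uᴴ g₂ f₂ * envSlice U g₁ f₁ := by
            rw [Matrix.star_mul, slice_star, slice_star, conjTranspose_conjTranspose]
          rw [hs]
          exact hgen g₂ f₂ g₁ f₁
        | algebraMap r =>
          refine ⟨?_, ?_⟩ <;>
            simp [Algebra.algebraMap_eq_smul_one, star_smul, smul_mul_assoc, mul_smul_comm]
        | add x y hx hy ihx ihy =>
          exact ⟨by rw [mul_add, add_mul, ihx.1, ihy.1],
            by rw [star_add, mul_add, add_mul, ihx.2, ihy.2]⟩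
        | mul x y hx hy ihx ihy =>
          exact ⟨by rw [← mul_assoc, ihx.1, mul_assoc, ihy.1, mul_assoc],
            by rw [Matrix.star_mul, ← mul_assoc, ihy.2, mul_assoc, ihx.2, mul_assoc]⟩
        | star x hx ihx =>
          exact ⟨ihx.2, by simpa [star_star] using ihx.1⟩
      exact (main A hA).1
  · intro A hA
    refine StarAlgebra.adjoin_le ?_
    rintro x ⟨f₁, g₁, f₂, g₂, rfl⟩
    rw [prod_eq_slice, slice_expand]
    exact sum_mem fun i _ => sum_mem fun j _ => SMulMemClass.smul_mem _ (hA _ i j)
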